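/- Under the stochastic setting and the CGE definition with μ_{c,i} = μ_c for all i, for every x ∈ ℝ^d: E‖G_c(x)‖² ≤ Σ_{i=1}^d (1/p_i) [ 2 (∂_i f(x))² + 3ζ²/b_c + (L² μ_c²/2)(1 + 3/b_c) ]. -/

import Mathlib

open MeasureTheory Finset
open scoped RealInnerProductSpace ENNReal

noncomputable section

/-- Euclidean space `ℝ^d`. -/
abbrev Euc (d : ℕ) := EuclideanSpace ℝ (Fin d)

/-- `g : ℝ^d → ℝ` is `L`-smooth: differentiable with `L`-Lipschitz gradient. -/
def LSmooth {d : ℕ} (g : Euc d → ℝ) (L : ℝ) : Prop :=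
  Differentiable ℝ g ∧ ∀ x y, ‖gradient g x - gradient g y‖ ≤ L * ‖x - y‖

/-- The uniform probability distribution on the unit sphere of `ℝ^d`, realized as the
pushforward of the normalized Lebesgue measure on the unit ball under radial projection. -/
def sphereUniform (d : ℕ) : Measure (Euc d) :=
  Measure.map (fun x => ‖x‖⁻¹ • x)
    ((volume (Metric.ball (0 : Euc d) 1))⁻¹ • volume.restrict (Metric.ball (0 : Euc d) 1))

/-- Sample space measure for the RGE: `b_r` i.i.d. data samples from `P` together with
`b_r × n_r` i.i.d. uniform directions on the unit sphere, all independent. -/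
def RGEmeas (d : ℕ) {Ω : Type} [MeasurableSpace Ω] (P : Measure Ω) (nr br : ℕ) :
    Measure ((Fin br → Ω) × (Fin br → Fin nr → Euc d)) :=
  (Measure.pi fun _ => P).prod (Measure.pi fun _ => Measure.pi fun _ => sphereUniform d)

/-- The random gradient estimator (RGE) at `x`, as a function of the sampled
data batch `ω.1` and sampled random directions `ω.2`. -/
def RGE {d : ℕ} {Ω : Type} (F : Euc d → Ω → ℝ) (μr : ℝ) (nr br : ℕ)
    (x : Euc d) (ω : (Fin br → Ω) × (Fin br → Fin nr → Euc d)) : Euc d :=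
  (br : ℝ)⁻¹ • ∑ j : Fin br, (nr : ℝ)⁻¹ • ∑ i : Fin nr,
    (((d : ℝ) / μr) * (F (x + μr • ω.2 j i) (ω.1 j) - F x (ω.1 j))) • ω.2 j i

/-- Bernoulli measure on `Bool` with success probability `p`. -/
def bern (p : ℝ) : Measure Bool :=
  ENNReal.ofReal p • Measure.dirac true + ENNReal.ofReal (1 - p) • Measure.dirac false

/-- Sample space measure for the CGE: independent Bernoulli coordinate-selection variables
`Z_i ~ Bern(p_i)` together with an independent i.i.d. data batch of size `b_c` from `P`. -/
def CGEmeas (d : ℕ) {Ω : Type} [MeasurableSpace Ω] (P : Measure Ω) (bc : ℕ) (p : Fin d → ℝ) :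
    Measure ((Fin d → Bool) × (Fin bc → Ω)) :=
  (Measure.pi fun i => bern (p i)).prod (Measure.pi fun _ => P)

/-- The importance-sampled coordinate-wise gradient estimator (CGE) at `x`, with
coordinate smoothing parameters `μc i`, selection probabilities `p i`, coordinate
indicators `ω.1` and data batch `ω.2`. -/
def CGE {d : ℕ} {Ω : Type} (F : Euc d → Ω → ℝ) (μc : Fin d → ℝ) (bc : ℕ) (p : Fin d → ℝ)
    (x : Euc d) (ω : (Fin d → Bool) × (Fin bc → Ω)) : Euc d :=
  ∑ i : Fin d, (((if ω.1 i then (1:ℝ) else 0) / p i) * ((bc : ℝ)⁻¹ *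
      ∑ j : Fin bc, (F (x + μc i • EuclideanSpace.single i (1:ℝ)) (ω.2 j)
        - F (x - μc i • EuclideanSpace.single i (1:ℝ)) (ω.2 j)) / (2 * μc i))) •
    EuclideanSpace.single i (1:ℝ)

set_option maxHeartbeats 2000000

/-! ### Auxiliary lemmas -/

lemma grad_coord {d : ℕ} (g : Euc d → ℝ) (x : Euc d) (i : Fin d) :
    gradient g x i = fderiv ℝ g x (EuclideanSpace.single i 1) := by
  rw [gradient, ← InnerProductSpace.toDual_symm_apply (𝕜 := ℝ)]
  rw [EuclideanSpace.inner_single_right]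
  simp

lemma fderiv_lip {d : ℕ} {g : Euc d → ℝ} {L : ℝ} (hg : LSmooth g L) (y z : Euc d) :
    ‖fderiv ℝ g y - fderiv ℝ g z‖ ≤ L * ‖y - z‖ := by
  have : fderiv ℝ g y - fderiv ℝ g z
      = InnerProductSpace.toDual ℝ (Euc d) (gradient g y - gradient g z) := by
    simp [gradient, map_sub]
  rw [this, LinearIsometryEquiv.norm_map]
  exact hg.2 y z

/-- central difference approximation error for an L-smooth function. -/
lemma central_diff {d : ℕ} {g : Euc d → ℝ} {L : ℝ} (hg : LSmooth g L) (hL : 0 ≤ L)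
    (x : Euc d) (i : Fin d) {μ : ℝ} (hμ : 0 < μ) :
    |(g (x + μ • EuclideanSpace.single i 1) - g (x - μ • EuclideanSpace.single i 1)) / (2 * μ)
      - gradient g x i| ≤ L * μ / 2 := by
  set e : Euc d := EuclideanSpace.single i 1 with he
  have hne : ‖e‖ = 1 := by simp [he]
  set c : Euc d := μ • e with hc
  have hnc : ‖c‖ = μ := by simp [hc, hne, norm_smul, abs_of_pos hμ]
  set φ' : ℝ → ℝ := fun t => fderiv ℝ g (x + t • c) c with hφ'
  have hderiv : ∀ t : ℝ, HasDerivAt (fun s : ℝ => g (x + s • c)) (φ' t) t := by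
    intro t
    have h1 : HasDerivAt (fun s : ℝ => x + s • c) c t := by
      simpa using ((hasDerivAt_id t).smul_const c).const_add x
    exact (hg.1 (x + t • c)).hasFDerivAt.comp_hasDerivAt t h1
  have hcont : Continuous φ' := by
    have h2 : Continuous fun y : Euc d => fderiv ℝ g y := by
      rw [Metric.continuous_iff]
      intro y ε hε
      rcases eq_or_lt_of_le hL with hL0 | hLpos
      · exact ⟨1, one_pos, fun z _ => by
          have := fderiv_lip hg z y
          rw [← hL0] at this
          simpa [dist_eq_norm] using lt_of_le_of_lt (by simpa using this) hε⟩
      · refine ⟨ε / L, by positivity, fun z hz => ?_⟩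
        have := fderiv_lip hg z y
        rw [dist_eq_norm] at hz ⊢
        calc ‖fderiv ℝ g z - fderiv ℝ g y‖ ≤ L * ‖z - y‖ := this
          _ < L * (ε / L) := by exact mul_lt_mul_of_pos_left hz hLpos
          _ = ε := by field_simp
    exact ((ContinuousLinearMap.apply ℝ ℝ c).continuous.comp
      (h2.comp (by continuity))).congr (fun t => rfl)
  have hint : IntervalIntegrable φ' volume (-1) 1 := hcont.intervalIntegrable _ _
  have hftc : ∫ t in (-1 : ℝ)..1, φ' t = g (x + c) - g (x - c) := by
    have := intervalIntegral.integral_eq_sub_of_hasDerivAt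
      (f := fun s : ℝ => g (x + s • c)) (f' := φ') (a := (-1:ℝ)) (b := 1)
      (fun t _ => hderiv t) hint
    simpa [one_smul, neg_smul, sub_eq_add_neg] using this
  have hconst : ∫ t in (-1 : ℝ)..1, φ' 0 = 2 * φ' 0 := by
    rw [intervalIntegral.integral_const, smul_eq_mul]; norm_num
  have hbound : ∀ t ∈ Set.uIcc (-1:ℝ) 1, |φ' t - φ' 0| ≤ L * μ ^ 2 * |t| := by
    intro t _
    have h3 : φ' t - φ' 0 = (fderiv ℝ g (x + t • c) - fderiv ℝ g (x + (0:ℝ) • c)) c := by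
      simp [hφ']
    rw [h3]
    calc |(fderiv ℝ g (x + t • c) - fderiv ℝ g (x + (0:ℝ) • c)) c|
        ≤ ‖fderiv ℝ g (x + t • c) - fderiv ℝ g (x + (0:ℝ) • c)‖ * ‖c‖ :=
          (fderiv ℝ g (x + t • c) - fderiv ℝ g (x + (0:ℝ) • c)).le_opNorm c
      _ ≤ (L * ‖(x + t • c) - (x + (0:ℝ) • c)‖) * ‖c‖ :=
          mul_le_mul_of_nonneg_right (fderiv_lip hg _ _) (norm_nonneg c)
      _ = L * μ ^ 2 * |t| := by
          have hx : (x + t • c) - (x + (0:ℝ) • c) = t • c := by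
            rw [zero_smul, add_zero]; exact add_sub_cancel_left x (t • c)
          rw [hx, norm_smul, Real.norm_eq_abs, hnc]; ring
  have habs : ∫ t in (-1:ℝ)..1, |t| = 1 := by
    rw [show ((-1:ℝ)) = -(1:ℝ) from rfl]
    rw [← intervalIntegral.integral_add_adjacent_intervals (a := (-1:ℝ)) (b := 0) (c := 1)
      (by apply Continuous.intervalIntegrable; continuity)
      (by apply Continuous.intervalIntegrable; continuity)]
    have e1 : ∫ t in (-1:ℝ)..0, |t| = ∫ t in (-1:ℝ)..0, -t := by
      apply intervalIntegral.integral_congr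
      intro t ht
      simp only [Set.uIcc_of_le (by norm_num : (-1:ℝ) ≤ 0)] at ht
      exact abs_of_nonpos ht.2
    have e2 : ∫ t in (0:ℝ)..1, |t| = ∫ t in (0:ℝ)..1, t := by
      apply intervalIntegral.integral_congr
      intro t ht
      simp only [Set.uIcc_of_le (by norm_num : (0:ℝ) ≤ 1)] at ht
      exact abs_of_nonneg ht.1
    rw [e1, e2, intervalIntegral.integral_neg, integral_id, integral_id]
    norm_num
  have hkey : |(g (x + c) - g (x - c)) - 2 * φ' 0| ≤ L * μ ^ 2 := by
    have hsub : (g (x + c) - g (x - c)) - 2 * φ' 0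
        = ∫ t in (-1:ℝ)..1, (φ' t - φ' 0) := by
      rw [intervalIntegral.integral_sub hint (intervalIntegrable_const), hftc, hconst]
    rw [hsub]
    have hle := intervalIntegral.norm_integral_le_of_norm_le
      (g := fun t => L * μ ^ 2 * |t|) (f := fun t => φ' t - φ' 0)
      (μ := volume) (a := (-1:ℝ)) (b := 1) (by norm_num)
      (by
        filter_upwards with t ht
        simpa using hbound t (by rw [Set.uIcc_of_le (by norm_num)]; exact Set.Ioc_subset_Icc_self ht))
      (by apply Continuous.intervalIntegrable; continuity)
    have h5 : |(∫ t in (-1:ℝ)..1, L * μ ^ 2 * |t|)| = L * μ ^ 2 := by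
      rw [intervalIntegral.integral_const_mul, habs, mul_one, abs_of_nonneg (by positivity)]
    rw [← Real.norm_eq_abs]
    exact le_trans hle (le_trans (le_abs_self _) (le_of_eq h5))
  have hφ'0 : φ' 0 = μ * gradient g x i := by
    have h4 : φ' 0 = (fderiv ℝ g x) c := by simp [hφ']
    rw [h4, hc, ContinuousLinearMap.map_smul, smul_eq_mul, grad_coord, he]
  have h2μ : (0:ℝ) < 2 * μ := by linarith
  rw [grad_coord]
  have hgoal : (g (x + c) - g (x - c)) / (2 * μ) - (fderiv ℝ g x) (EuclideanSpace.single i 1)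
      = (g (x + c) - g (x - c) - 2 * φ' 0) / (2 * μ) := by
    rw [hφ'0, grad_coord]; field_simp
  rw [hgoal, abs_div, abs_of_pos h2μ, div_le_iff₀ h2μ]
  calc |g (x + c) - g (x - c) - 2 * φ' 0| ≤ L * μ ^ 2 := hkey
    _ = L * μ / 2 * (2 * μ) := by ring

/-- a.e.-measurability of the i-th partial derivative in the sample variable. -/
lemma aemeasurable_grad {d : ℕ} {Ω : Type} [MeasurableSpace Ω] {P : Measure Ω}
    (F : Euc d → Ω → ℝ) (hFmeas : Measurable (Function.uncurry F))
    (hdiff : ∀ᵐ ω ∂P, Differentiable ℝ (fun y => F y ω)) (x : Euc d) (i : Fin d) :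
    AEMeasurable (fun ω => gradient (fun y => F y ω) x i) P := by
  set e : Euc d := EuclideanSpace.single i 1 with he
  apply aemeasurable_of_tendsto_metrizable_ae'
    (f := fun (n : ℕ) (ω : Ω) => ((n : ℝ) + 1) * (F (x + ((n : ℝ) + 1)⁻¹ • e) ω - F x ω))
  · intro n
    apply AEMeasurable.const_mul
    exact ((hFmeas.comp (measurable_prodMk_left)).sub
      (hFmeas.comp (measurable_prodMk_left))).aemeasurable
  · filter_upwards [hdiff] with ω hω
    have hD : HasDerivAt (fun t : ℝ => F (x + t • e) ω)
        (fderiv ℝ (fun y => F y ω) x e) 0 := by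
      have h1 : HasDerivAt (fun s : ℝ => x + s • e) e 0 := by
        simpa using ((hasDerivAt_id (0:ℝ)).smul_const e).const_add x
      have := (hω (x + (0:ℝ) • e)).hasFDerivAt.comp_hasDerivAt 0 h1
      rw [zero_smul, add_zero] at this; exact this
    have hslope := hasDerivAt_iff_tendsto_slope.mp hD
    have htn : Filter.Tendsto (fun n : ℕ => ((n : ℝ) + 1)⁻¹) Filter.atTop
        (nhdsWithin 0 {(0:ℝ)}ᶜ) := by
      rw [tendsto_nhdsWithin_iff]
      constructor
      · exact tendsto_one_div_add_atTop_nhds_zero_nat.congr (by intro n; rw [one_div])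
      · filter_upwards with n
        simp only [Set.mem_compl_iff, Set.mem_singleton_iff]
        positivity
    have := hslope.comp htn
    rw [grad_coord]
    convert this using 2 with n
    rw [Function.comp_apply, slope_def_field, zero_smul, add_zero]
    field_simp
    ring

lemma bern_prob {p : ℝ} (h0 : 0 ≤ p) (h1 : p ≤ 1) : IsProbabilityMeasure (bern p) := by
  constructor
  rw [bern]
  simp only [Measure.add_apply, Measure.smul_apply, Measure.dirac_apply_of_mem (Set.mem_univ _),
    smul_eq_mul, mul_one]
  rw [← ENNReal.ofReal_add h0 (by linarith)]
  norm_num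

lemma map_eval_pi {ι : Type*} [Fintype ι] [DecidableEq ι] {α : ι → Type*}
    [∀ i, MeasurableSpace (α i)]
    (μ : ∀ i, Measure (α i)) [∀ i, IsProbabilityMeasure (μ i)] (i : ι) :
    Measure.map (Function.eval i) (Measure.pi μ) = μ i := by
  apply Measure.ext
  intro s hs
  rw [Measure.map_apply (measurable_pi_apply i) hs, ← Set.univ_pi_update_univ, Measure.pi_pi]
  rw [Fintype.prod_eq_single i]
  · simp
  · intro j hj
    simp [Function.update_of_ne hj]

lemma measurePreserving_eval {ι : Type*} [Fintype ι] [DecidableEq ι] {α : ι → Type*}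
    [∀ i, MeasurableSpace (α i)]
    (μ : ∀ i, Measure (α i)) [∀ i, IsProbabilityMeasure (μ i)] (i : ι) :
    MeasurePreserving (Function.eval i) (Measure.pi μ) (μ i) :=
  ⟨measurable_pi_apply i, map_eval_pi μ i⟩

lemma bern_integral (p : ℝ) (h0 : 0 ≤ p) (h1 : p ≤ 1) (f : Bool → ℝ) :
    ∫ z, f z ∂(bern p) = p * f true + (1 - p) * f false := by
  have i1 : IsFiniteMeasure (ENNReal.ofReal p • Measure.dirac true) := by
    constructor; simp [lt_top_iff_ne_top]
  have i2 : IsFiniteMeasure (ENNReal.ofReal (1 - p) • Measure.dirac false) := by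
    constructor; simp [lt_top_iff_ne_top]
  rw [bern, integral_add_measure (Integrable.of_finite) (Integrable.of_finite),
    integral_smul_measure, integral_smul_measure, integral_dirac, integral_dirac]
  rw [ENNReal.toReal_ofReal h0, ENNReal.toReal_ofReal (by linarith)]
  simp [smul_eq_mul]

lemma bern_sq (p : ℝ) (h0 : 0 < p) (h1 : p ≤ 1) :
    ∫ z, ((if z then (1:ℝ) else 0) / p) ^ 2 ∂(bern p) = 1 / p := by
  rw [bern_integral p h0.le h1]
  simp only [if_true, if_false, Bool.false_eq_true]
  field_simp
  ring

lemma prod_two {M : Type*} [CommMonoid M] {n : ℕ} {m l : Fin n} (hml : m ≠ l) (a : Fin n → M)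
    (hother : ∀ k, k ≠ m → k ≠ l → a k = 1) : ∏ k, a k = a m * a l := by
  rw [← Finset.mul_prod_erase Finset.univ a (Finset.mem_univ m),
    ← Finset.mul_prod_erase _ a (Finset.mem_erase.mpr ⟨hml.symm, Finset.mem_univ l⟩),
    Finset.prod_eq_one, mul_one]
  intro k hk
  rw [Finset.mem_erase, Finset.mem_erase] at hk
  exact hother k hk.2.1 hk.1

/-- Second moment of the average of iid copies. -/
lemma pi_avg_sq {Ω : Type} [MeasurableSpace Ω] (P : Measure Ω) [IsProbabilityMeasure P]
    (h : Ω → ℝ) (hmeas : Measurable h) (hL2 : MemLp h 2 P) (bc : ℕ) (hbc : 1 ≤ bc) :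
    ∫ ξ, ((bc:ℝ)⁻¹ * ∑ j : Fin bc, h (ξ j)) ^ 2 ∂(Measure.pi fun _ : Fin bc => P)
      = (bc:ℝ)⁻¹ * (∫ t, h t ^ 2 ∂P) + (1 - (bc:ℝ)⁻¹) * (∫ t, h t ∂P) ^ 2 := by
  letI : MeasureSpace Ω := ⟨P⟩
  haveI : IsProbabilityMeasure (volume : Measure Ω) := ‹IsProbabilityMeasure P›
  have hvol : (Measure.pi fun _ : Fin bc => P) = (volume : Measure (Fin bc → Ω)) :=
    (MeasureTheory.volume_pi).symm
  have hint1 : Integrable h (volume : Measure Ω) := hL2.integrable one_le_two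
  have hint2 : Integrable (fun t => h t ^ 2) (volume : Measure Ω) := hL2.integrable_sq
  set S := ∫ t, h t ∂P with hS
  set Q := ∫ t, h t ^ 2 ∂P with hQ
  have key : ∀ m l : Fin bc, ∫ ξ : Fin bc → Ω, h (ξ m) * h (ξ l)
      = (if m = l then Q else S ^ 2) := by
    intro m l
    by_cases hml : m = l
    · subst hml
      simp only [if_true, ← pow_two]
      have hpt : (fun ξ : Fin bc → Ω => h (ξ m) ^ 2)
          = fun ξ => ∏ k, (fun k => if k = m then (fun t => h t ^ 2)
              else (fun _ => (1:ℝ))) k (ξ k) := by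
        funext ξ
        rw [Finset.prod_eq_single m]
        · simp
        · intro k _ hk; simp [hk]
        · simp
      rw [hpt, MeasureTheory.integral_fintype_prod_volume_eq_prod]
      rw [Finset.prod_eq_single m]
      · simp only [if_true]
        rfl
      · intro k _ hk; simp [hk]
      · simp
    · simp only [hml, if_false]
      have hpt : (fun ξ : Fin bc → Ω => h (ξ m) * h (ξ l))
          = fun ξ => ∏ k, (fun k => if k = m then h else if k = l then h
              else (fun _ => (1:ℝ))) k (ξ k) := by
        funext ξ
        rw [prod_two (a := fun k => (if k = m then h else if k = l then h
            else (fun _ => (1:ℝ))) (ξ k)) (m := m) (l := l) (fun h' => hml h')]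
        · simp [hml]
        · intro k hk1 hk2; simp [hk1, hk2]
      rw [hpt, MeasureTheory.integral_fintype_prod_volume_eq_prod]
      rw [prod_two (m := m) (l := l) (fun h' => hml h')]
      · simp only [eq_self_iff_true, if_true, ite_self]
        rw [pow_two]
        rfl
      · intro k hk1 hk2; simp [hk1, hk2]
  have hintml : ∀ m l : Fin bc, Integrable (fun ξ : Fin bc → Ω => h (ξ m) * h (ξ l))
      (volume : Measure (Fin bc → Ω)) := by
    intro m l
    by_cases hml : m = l
    · subst hml
      have : (fun ξ : Fin bc → Ω => h (ξ m) * h (ξ m))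
          = fun ξ => ∏ k, (fun k => if k = m then (fun t => h t * h t)
              else (fun _ => (1:ℝ))) k (ξ k) := by
        funext ξ
        rw [Finset.prod_eq_single m]
        · simp
        · intro k _ hk; simp [hk]
        · simp
      rw [this]
      apply MeasureTheory.Integrable.fintype_prod
        (f := fun k => if k = m then (fun t => h t * h t) else (fun _ => (1:ℝ)))
      intro k
      by_cases hk : k = m
      · simpa [hk, pow_two] using hint2
      · simp [hk]
    · have : (fun ξ : Fin bc → Ω => h (ξ m) * h (ξ l))
          = fun ξ => ∏ k, (fun k => if k = m then h else if k = l then h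
              else (fun _ => (1:ℝ))) k (ξ k) := by
        funext ξ
        rw [prod_two (m := m) (l := l) (fun h' => hml h')]
        · simp [hml]
        · intro k hk1 hk2; simp [hk1, hk2]
      rw [this]
      apply MeasureTheory.Integrable.fintype_prod
      intro k
      by_cases hk1 : k = m
      · simpa [hk1] using hint1
      · by_cases hk2 : k = l
        · simpa [hk1, hk2] using hint1
        · simp [hk1, hk2]
  have hpt2 : ∀ ξ : Fin bc → Ω, ((bc:ℝ)⁻¹ * ∑ j : Fin bc, h (ξ j)) ^ 2
      = ((bc:ℝ)⁻¹) ^ 2 * ∑ m : Fin bc, ∑ l : Fin bc, h (ξ m) * h (ξ l) := by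
    intro ξ
    rw [mul_pow, pow_two (∑ j : Fin bc, h (ξ j)), Finset.sum_mul_sum]
  rw [hvol]
  simp_rw [hpt2]
  rw [show (fun ξ : Fin bc → Ω => (bc:ℝ)⁻¹ ^ 2 * ∑ m : Fin bc, ∑ l : Fin bc, h (ξ m) * h (ξ l))
      = (fun ξ : Fin bc → Ω => (bc:ℝ)⁻¹ ^ 2 • (∑ m : Fin bc, ∑ l : Fin bc, h (ξ m) * h (ξ l)))
    from rfl, integral_smul, smul_eq_mul]
  rw [integral_finset_sum _ (fun m _ => integrable_finset_sum _ (fun l _ => hintml m l))]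
  have : ∀ m : Fin bc, ∫ ξ : Fin bc → Ω, ∑ l : Fin bc, h (ξ m) * h (ξ l)
      = ∑ l : Fin bc, ∫ ξ : Fin bc → Ω, h (ξ m) * h (ξ l) := fun m =>
    integral_finset_sum _ (fun l _ => hintml m l)
  simp_rw [this, key]
  have hsum : ∀ m : Fin bc, (∑ l : Fin bc, if m = l then Q else S ^ 2)
      = Q + ((bc:ℝ) - 1) * S ^ 2 := by
    intro m
    have : ∀ l : Fin bc, (if m = l then Q else S ^ 2)
        = S ^ 2 + (if m = l then Q - S ^ 2 else 0) := by
      intro l; by_cases hml : m = l <;> simp [hml]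
    simp_rw [this]
    rw [Finset.sum_add_distrib, Finset.sum_const, Finset.sum_ite_eq]
    simp [Fintype.card_fin]
    ring
  simp_rw [hsum]
  rw [Finset.sum_const]
  have hbc0 : ((bc:ℝ)) ≠ 0 := by positivity
  simp only [Finset.card_univ, Fintype.card_fin, nsmul_eq_mul]
  field_simp

lemma key_bound {Ω : Type} [MeasurableSpace Ω] (P : Measure Ω) [IsProbabilityMeasure P]
    (h g : Ω → ℝ) (hmeas : Measurable h) (hgm : AEMeasurable g P)
    (hL2 : MemLp h 2 P) {κ a c : ℝ} (hκ : 0 ≤ κ) (hc : 0 ≤ c)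
    (hbnd : ∀ᵐ ω ∂P, |h ω - g ω| ≤ κ)
    (hmean : ∫ ω, g ω ∂P = a)
    (hvar : ∫ ω, (g ω - a) ^ 2 ∂P ≤ c ^ 2)
    (bc : ℕ) (hbc : 1 ≤ bc) :
    ∫ ξ, ((bc:ℝ)⁻¹ * ∑ j : Fin bc, h (ξ j)) ^ 2 ∂(Measure.pi fun _ : Fin bc => P)
      ≤ 2 * a ^ 2 + 2 * κ ^ 2 + (3 * c ^ 2 + 6 * κ ^ 2) / bc := by
  have hv2 : MemLp (fun ω => h ω - g ω) 2 P := by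
    apply MemLp.of_bound ((hmeas.aemeasurable.sub hgm).aestronglyMeasurable) κ
    filter_upwards [hbnd] with ω hω
    simpa [Real.norm_eq_abs] using hω
  have hg2 : MemLp g 2 P := by
    have : g = fun ω => h ω - (h ω - g ω) := by funext ω; ring
    rw [this]
    exact hL2.sub hv2
  have hu2 : MemLp (fun ω => g ω - a) 2 P := hg2.sub (memLp_const a)
  have hw2 : MemLp (fun ω => h ω - a) 2 P := hL2.sub (memLp_const a)
  have hint1 : Integrable h P := hL2.integrable one_le_two
  have hgint : Integrable g P := hg2.integrable one_le_two
  have hvint : Integrable (fun ω => h ω - g ω) P := hint1.sub hgint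
  set S := ∫ t, h t ∂P with hS
  set Q := ∫ t, h t ^ 2 ∂P with hQ
  have hSa : S - a = ∫ ω, (h ω - g ω) ∂P := by
    rw [integral_sub hint1 hgint, hmean, hS]
  have hSabs : |S - a| ≤ κ := by
    rw [hSa]
    calc |∫ ω, (h ω - g ω) ∂P| ≤ ∫ ω, |h ω - g ω| ∂P := by
          simpa [Real.norm_eq_abs] using
            norm_integral_le_integral_norm (fun ω => h ω - g ω) (μ := P)
      _ ≤ ∫ _ω, κ ∂P := integral_mono_ae hvint.abs (integrable_const κ) hbnd
      _ = κ := by simp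
  have hvsq : ∫ ω, (h ω - g ω) ^ 2 ∂P ≤ κ ^ 2 := by
    calc ∫ ω, (h ω - g ω) ^ 2 ∂P ≤ ∫ _ω, κ ^ 2 ∂P := by
          apply integral_mono_ae hv2.integrable_sq (integrable_const _)
          filter_upwards [hbnd] with ω hω
          have := abs_nonneg (h ω - g ω)
          nlinarith [abs_le.mp hω]
      _ = κ ^ 2 := by simp
  have hwsq : ∫ ω, (h ω - a) ^ 2 ∂P ≤ 2 * c ^ 2 + 2 * κ ^ 2 := by
    have hpt : ∀ ω, (h ω - a) ^ 2 ≤ 2 * (g ω - a) ^ 2 + 2 * (h ω - g ω) ^ 2 := by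
      intro ω; nlinarith [sq_nonneg (g ω - a - (h ω - g ω))]
    calc ∫ ω, (h ω - a) ^ 2 ∂P
        ≤ ∫ ω, (2 * (g ω - a) ^ 2 + 2 * (h ω - g ω) ^ 2) ∂P := by
          apply integral_mono hw2.integrable_sq
            ((hu2.integrable_sq.const_mul 2).add (hv2.integrable_sq.const_mul 2))
          intro ω; exact hpt ω
      _ = 2 * (∫ ω, (g ω - a) ^ 2 ∂P) + 2 * (∫ ω, (h ω - g ω) ^ 2 ∂P) := by
          rw [integral_add (hu2.integrable_sq.const_mul 2) (hv2.integrable_sq.const_mul 2),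
            integral_const_mul, integral_const_mul]
      _ ≤ 2 * c ^ 2 + 2 * κ ^ 2 := by nlinarith
  have hQval : Q = (∫ ω, (h ω - a) ^ 2 ∂P) + 2 * a * (S - a) + a ^ 2 := by
    have hpt : ∀ ω, h ω ^ 2 = (h ω - a) ^ 2 + 2 * a * (h ω - a) + a ^ 2 := by
      intro ω; ring
    rw [hQ]
    simp_rw [hpt]
    rw [integral_add (show Integrable (fun t => (h t - a) ^ 2 + 2 * a * (h t - a)) P from
        hw2.integrable_sq.add ((hw2.integrable one_le_two).const_mul (2 * a)))
      (integrable_const (a ^ 2)),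
      integral_add hw2.integrable_sq ((hw2.integrable one_le_two).const_mul (2 * a)),
      integral_const_mul, integral_sub hint1 (integrable_const a)]
    simp [hS]
  have hQle : Q ≤ 2 * a ^ 2 + 2 * c ^ 2 + 3 * κ ^ 2 := by
    rw [hQval]
    have hd : (S - a) ^ 2 ≤ κ ^ 2 := sq_le_sq' (abs_le.mp hSabs).1 (abs_le.mp hSabs).2
    nlinarith [hwsq, hd, sq_nonneg (a - (S - a))]
  have hS2le : S ^ 2 ≤ 2 * a ^ 2 + 2 * κ ^ 2 := by
    have hd : (S - a) ^ 2 ≤ κ ^ 2 := sq_le_sq' (abs_le.mp hSabs).1 (abs_le.mp hSabs).2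
    nlinarith [hd, sq_nonneg (a - (S - a))]
  have hQ0 : 0 ≤ Q := integral_nonneg (fun ω => sq_nonneg _)
  rw [pi_avg_sq P h hmeas hL2 bc hbc, ← hS, ← hQ]
  have hb1 : (1:ℝ) ≤ (bc:ℝ) := by exact_mod_cast hbc
  have hb0 : (0:ℝ) < (bc:ℝ) := by linarith
  have hbi0 : (0:ℝ) < (bc:ℝ)⁻¹ := by positivity
  have hbi1 : (bc:ℝ)⁻¹ ≤ 1 := by
    rw [inv_le_one_iff₀]; right; exact hb1
  rw [div_eq_mul_inv]
  nlinarith [mul_le_mul_of_nonneg_left hQle hbi0.le,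
    mul_le_mul_of_nonneg_left hS2le (by linarith : (0:ℝ) ≤ 1 - (bc:ℝ)⁻¹),
    mul_pos hbi0 hbi0, sq_nonneg κ, sq_nonneg c, hbi0.le]

lemma bad_not_integrable {Ω : Type} [MeasurableSpace Ω] (P : Measure Ω) [IsProbabilityMeasure P]
    (h : Ω → ℝ) (hmeas : Measurable h) (hno : ¬ MemLp h 2 P) (bc : ℕ) (hbc : 1 ≤ bc) :
    ¬ Integrable (fun ξ : Fin bc → Ω => ((bc:ℝ)⁻¹ * ∑ j : Fin bc, h (ξ j)) ^ 2)
      (Measure.pi fun _ : Fin bc => P) := by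
  intro HI
  obtain ⟨n, rfl⟩ := Nat.exists_eq_succ_of_ne_zero (by omega : bc ≠ 0)
  set e := MeasurableEquiv.piFinSuccAbove (fun _ : Fin (n+1) => Ω) 0 with he
  have mp : MeasurePreserving (⇑e) (Measure.pi fun _ : Fin (n+1) => P)
      ((P : Measure Ω).prod (Measure.pi fun _ : Fin n => P)) :=
    measurePreserving_piFinSuccAbove (fun _ : Fin (n+1) => P) 0
  have mp' : MeasurePreserving (⇑e.symm)
      ((P : Measure Ω).prod (Measure.pi fun _ : Fin n => P))
      (Measure.pi fun _ : Fin (n+1) => P) := MeasurePreserving.symm e mp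
  have HI2 : Integrable ((fun ξ : Fin (n+1) → Ω =>
      (((n:ℝ)+1)⁻¹ * ∑ j : Fin (n+1), h (ξ j)) ^ 2) ∘ ⇑e.symm)
      ((P : Measure Ω).prod (Measure.pi fun _ : Fin n => P)) := by
    rw [mp'.integrable_comp_emb e.symm.measurableEmbedding]
    have : ((n:ℝ)+1) = ((n+1 : ℕ) : ℝ) := by push_cast; ring
    rw [this]
    exact HI
  have HI3 := HI2.prod_left_ae
  haveI : (ae (Measure.pi fun _ : Fin n => P)).NeBot :=
    MeasureTheory.ae_neBot.mpr (IsProbabilityMeasure.ne_zero _)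
  obtain ⟨y, hy⟩ := HI3.exists
  set C := ∑ m : Fin n, h (y m) with hC
  have hcomp : ∀ t : Ω, (∑ j : Fin (n+1), h ((e.symm (t, y)) j)) = h t + C := by
    intro t
    have hsymm : (e.symm (t, y)) = Fin.insertNth 0 t y := by
      simp [he, MeasurableEquiv.piFinSuccAbove_symm_apply, Fin.insertNthEquiv]
    rw [hsymm, Fin.insertNth_zero, Fin.sum_univ_succ]
    simp [hC]
  have hy2 : Integrable (fun t : Ω => (((n:ℝ)+1)⁻¹ * (h t + C)) ^ 2) P := by
    apply hy.congr
    filter_upwards with t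
    simp only [Function.comp_apply]
    rw [hcomp t]
  have h2 : Integrable (fun t : Ω => (h t + C) ^ 2) P := by
    have hne : ((n:ℝ)+1) ≠ 0 := by positivity
    have := hy2.const_mul (((n:ℝ)+1) ^ 2)
    apply this.congr
    filter_upwards with t
    field_simp
  have hmem : MemLp (fun t : Ω => h t + C) 2 P :=
    (memLp_two_iff_integrable_sq ((hmeas.add_const C).aestronglyMeasurable)).mpr h2
  have : MemLp h 2 P := by
    have h3 := hmem.sub (memLp_const (μ := P) C)
    have h4 : ((fun t : Ω => h t + C) - fun _ => C) = h := by
      funext t; simp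
    rwa [h4] at h3
  exact hno this

lemma sum_single_apply {d : ℕ} (r : Fin d → ℝ) (k : Fin d) :
    (∑ i, r i • EuclideanSpace.single i (1:ℝ)) k = r k := by
  rw [WithLp.ofLp_sum, Finset.sum_apply]
  have : ∀ i : Fin d, (r i • EuclideanSpace.single i (1:ℝ)) k = if k = i then r i else 0 := by
    intro i
    rw [PiLp.smul_apply, EuclideanSpace.single_apply]
    simp [smul_eq_mul]
  simp_rw [this]
  simp

lemma euc_sum_single {d : ℕ} (v : Euc d) :
    (∑ i, v i • EuclideanSpace.single i (1:ℝ)) = v := by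
  ext k
  rw [sum_single_apply]

/-- **Proposition 4, bound IV: second moment of the importance-sampled CGE**
(with a common smoothing parameter `μ_c` for all coordinates). -/
theorem cge_second_moment_bound
    (d : ℕ) (hd : 1 ≤ d)
    {Ω : Type} [MeasurableSpace Ω] (P : Measure Ω) [IsProbabilityMeasure P]
    (L ζ : ℝ) (hL : 0 ≤ L) (hζ : 0 ≤ ζ)
    (F : Euc d → Ω → ℝ)
    (hFmeas : Measurable (Function.uncurry F))
    (hFsmooth : ∀ᵐ ω ∂P, LSmooth (fun x => F x ω) L)
    (f : Euc d → ℝ) (hfdef : ∀ x, f x = ∫ ω, F x ω ∂P)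
    (hfsmooth : LSmooth f L)
    (hgradf : ∀ x, gradient f x = ∫ ω, gradient (fun y => F y ω) x ∂P)
    (hvar : ∀ (x : Euc d) (i : Fin d),
      ∫ ω, (gradient (fun y => F y ω) x i - gradient f x i) ^ 2 ∂P ≤ ζ ^ 2)
    (μc : ℝ) (hμc : 0 < μc)
    (bc : ℕ) (hbc : 1 ≤ bc)
    (p : Fin d → ℝ) (hp : ∀ i, 0 < p i ∧ p i ≤ 1)
    (x : Euc d) :
    ∫ ω, ‖CGE F (fun _ => μc) bc p x ω‖ ^ 2 ∂(CGEmeas d P bc p)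
      ≤ ∑ i : Fin d, (1 / p i) * (2 * (gradient f x i) ^ 2
          + 3 * ζ ^ 2 / (bc : ℝ)
          + (L ^ 2 * μc ^ 2 / 2) * (1 + 3 / (bc : ℝ))) := by
  classical
  haveI : ∀ i : Fin d, IsProbabilityMeasure (bern (p i)) :=
    fun i => bern_prob (hp i).1.le (hp i).2
  set μZ : Measure (Fin d → Bool) := Measure.pi fun i => bern (p i) with hμZ
  set μX : Measure (Fin bc → Ω) := Measure.pi fun _ : Fin bc => P with hμX
  haveI : IsProbabilityMeasure μZ := by rw [hμZ]; infer_instance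
  haveI : IsProbabilityMeasure μX := by rw [hμX]; infer_instance
  set h : Fin d → Ω → ℝ := fun i t =>
    (F (x + μc • EuclideanSpace.single i (1:ℝ)) t
      - F (x - μc • EuclideanSpace.single i (1:ℝ)) t) / (2 * μc) with hhdef
  have hmeasF : ∀ y : Euc d, Measurable (fun t => F y t) :=
    fun y => hFmeas.comp measurable_prodMk_left
  have hmeas : ∀ i, Measurable (h i) := fun i => ((hmeasF _).sub (hmeasF _)).div_const _
  set φ : Fin d → (Fin d → Bool) → ℝ :=
    fun i z => ((if z i then (1:ℝ) else 0) / p i) ^ 2 with hφdef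
  set ψ : Fin d → (Fin bc → Ω) → ℝ :=
    fun i ξ => ((bc:ℝ)⁻¹ * ∑ j : Fin bc, h i (ξ j)) ^ 2 with hψdef
  have hψmeas : ∀ i, Measurable (ψ i) := by
    intro i
    apply Measurable.pow_const
    exact (Finset.measurable_sum _ (fun j _ =>
      (hmeas i).comp (measurable_pi_apply j))).const_mul _
  have hptnorm : ∀ ω : (Fin d → Bool) × (Fin bc → Ω),
      ‖CGE F (fun _ => μc) bc p x ω‖ ^ 2 = ∑ i, φ i ω.1 * ψ i ω.2 := by
    intro ω
    rw [CGE, EuclideanSpace.norm_eq, Real.sq_sqrt (by positivity)]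
    apply Finset.sum_congr rfl
    intro k _
    rw [sum_single_apply (fun i => ((if ω.1 i then (1:ℝ) else 0) / p i) * ((bc : ℝ)⁻¹ *
      ∑ j : Fin bc, (F (x + μc • EuclideanSpace.single i (1:ℝ)) (ω.2 j)
        - F (x - μc • EuclideanSpace.single i (1:ℝ)) (ω.2 j)) / (2 * μc))) k]
    rw [Real.norm_eq_abs, sq_abs, mul_pow]
  have hCGEfun : (fun ω : (Fin d → Bool) × (Fin bc → Ω) =>
      ‖CGE F (fun _ => μc) bc p x ω‖ ^ 2)
      = fun ω : (Fin d → Bool) × (Fin bc → Ω) => ∑ i, φ i ω.1 * ψ i ω.2 :=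
    funext hptnorm
  have hmeaseq : CGEmeas d P bc p = μZ.prod μX := rfl
  have hφval : ∀ i, ∫ z, φ i z ∂μZ = 1 / p i := by
    intro i
    have h2 := integral_map (μ := μZ) (φ := fun z : Fin d → Bool => z i)
      (f := fun s : Bool => ((if s then (1:ℝ) else 0) / p i) ^ 2)
      ((measurable_pi_apply i).aemeasurable)
      ((measurable_of_countable _).aestronglyMeasurable)
    have h3 : Measure.map (fun z : Fin d → Bool => z i) μZ = bern (p i) := by
      rw [hμZ]; exact map_eval_pi (fun i => bern (p i)) i
    rw [h3] at h2
    exact h2.symm.trans (bern_sq (p i) (hp i).1 (hp i).2)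
  by_cases hGOOD : ∀ i, MemLp (h i) 2 P
  · -- good case: full computation
    have hφint : ∀ i, Integrable (φ i) μZ := fun i => Integrable.of_finite
    have hψmem : ∀ i, MemLp (fun ξ : Fin bc → Ω => (bc:ℝ)⁻¹ * ∑ j : Fin bc, h i (ξ j)) 2 μX := by
      intro i
      have hsum : MemLp (fun ξ : Fin bc → Ω => ∑ j : Fin bc, h i (ξ j)) 2 μX := by
        have := memLp_finset_sum (Finset.univ : Finset (Fin bc))
          (f := fun j (ξ : Fin bc → Ω) => h i (ξ j)) (μ := μX) (p := 2)
          (fun j _ => (hGOOD i).comp_measurePreserving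
            (by rw [hμX]; exact _root_.measurePreserving_eval (fun _ : Fin bc => P) j))
        exact this
      exact hsum.const_mul _
    have hψint : ∀ i, Integrable (ψ i) μX := fun i => (hψmem i).integrable_sq
    have hdiff : ∀ᵐ ω ∂P, Differentiable ℝ (fun y => F y ω) :=
      hFsmooth.mono fun ω hω => hω.1
    set gc : Fin d → Ω → ℝ := fun i ω => gradient (fun y => F y ω) x i with hgcdef
    have hae : ∀ i, AEMeasurable (gc i) P := fun i => aemeasurable_grad F hFmeas hdiff x i
    have hbnd : ∀ i, ∀ᵐ ω ∂P, |h i ω - gc i ω| ≤ L * μc / 2 := by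
      intro i
      filter_upwards [hFsmooth] with ω hω
      exact central_diff hω hL x i hμc
    have hgmem : ∀ i, MemLp (gc i) 2 P := by
      intro i
      have hv2 : MemLp (fun ω => h i ω - gc i ω) 2 P := by
        apply MemLp.of_bound (((hmeas i).aemeasurable.sub (hae i)).aestronglyMeasurable)
          (L * μc / 2)
        filter_upwards [hbnd i] with ω hω
        simpa [Real.norm_eq_abs] using hω
      have : gc i = fun ω => h i ω - (h i ω - gc i ω) := by funext ω; ring
      rw [this]
      exact (hGOOD i).sub hv2
    have hGint : Integrable (fun ω => gradient (fun y => F y ω) x) P := by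
      have hrep : (fun ω => gradient (fun y => F y ω) x)
          = fun ω => ∑ i, gc i ω • EuclideanSpace.single i (1:ℝ) := by
        funext ω
        rw [← euc_sum_single (gradient (fun y => F y ω) x)]
      rw [hrep]
      apply integrable_finset_sum
      intro i _
      exact ((hgmem i).integrable one_le_two).smul_const _
    have hmean : ∀ i, ∫ ω, gc i ω ∂P = gradient f x i := by
      intro i
      have hc := (EuclideanSpace.proj i : Euc d →L[ℝ] ℝ).integral_comp_comm hGint
      calc ∫ ω, gc i ω ∂P
          = ∫ ω, (EuclideanSpace.proj i : Euc d →L[ℝ] ℝ) (gradient (fun y => F y ω) x) ∂P := rfl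
        _ = (EuclideanSpace.proj i : Euc d →L[ℝ] ℝ) (∫ ω, gradient (fun y => F y ω) x ∂P) := hc
        _ = gradient f x i := by rw [← hgradf x]; rfl
    have hbc0 : ((bc:ℝ)) ≠ 0 := by positivity
    calc ∫ ω, ‖CGE F (fun _ => μc) bc p x ω‖ ^ 2 ∂(CGEmeas d P bc p)
        = ∑ i, (∫ z, φ i z ∂μZ) * (∫ ξ, ψ i ξ ∂μX) := by
          rw [hmeaseq, hCGEfun,
            integral_finset_sum _ (fun i _ => (hφint i).mul_prod (hψint i))]
          exact Finset.sum_congr rfl fun i _ => integral_prod_mul _ _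
      _ ≤ ∑ i : Fin d, (1 / p i) * (2 * (gradient f x i) ^ 2
          + 3 * ζ ^ 2 / (bc : ℝ)
          + (L ^ 2 * μc ^ 2 / 2) * (1 + 3 / (bc : ℝ))) := by
          apply Finset.sum_le_sum
          intro i _
          rw [hφval i]
          apply mul_le_mul_of_nonneg_left _ (div_nonneg zero_le_one (hp i).1.le)
          have hkb := key_bound P (h i) (gc i) (hmeas i) (hae i) (hGOOD i)
            (by positivity : (0:ℝ) ≤ L * μc / 2) hζ (hbnd i) (hmean i)
            (by simpa [hgcdef] using hvar x i) bc hbc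
          have hbr : 2 * (gradient f x i) ^ 2 + 2 * (L * μc / 2) ^ 2
              + (3 * ζ ^ 2 + 6 * (L * μc / 2) ^ 2) / bc
              = 2 * (gradient f x i) ^ 2 + 3 * ζ ^ 2 / (bc : ℝ)
              + (L ^ 2 * μc ^ 2 / 2) * (1 + 3 / (bc : ℝ)) := by
            field_simp
            ring
          rw [hψdef]
          calc ∫ ξ, ((bc:ℝ)⁻¹ * ∑ j : Fin bc, h i (ξ j)) ^ 2 ∂μX
              ≤ 2 * (gradient f x i) ^ 2 + 2 * (L * μc / 2) ^ 2
                + (3 * ζ ^ 2 + 6 * (L * μc / 2) ^ 2) / bc := by rw [hμX]; exact hkb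
            _ = _ := hbr
  · -- bad case: the integrand is not integrable, so the integral is 0
    push_neg at hGOOD
    obtain ⟨i0, hi0⟩ := hGOOD
    have hnint : ¬ Integrable (fun ω => ‖CGE F (fun _ => μc) bc p x ω‖ ^ 2)
        (CGEmeas d P bc p) := by
      intro HInt
      rw [hCGEfun, hmeaseq] at HInt
      have hterm : Integrable (fun ω : (Fin d → Bool) × (Fin bc → Ω) =>
          φ i0 ω.1 * ψ i0 ω.2) (μZ.prod μX) := by
        apply HInt.mono'
        · exact (((measurable_of_countable (φ i0)).comp measurable_fst).mul
            ((hψmeas i0).comp measurable_snd)).aestronglyMeasurable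
        · filter_upwards with ω
          rw [Real.norm_eq_abs, abs_of_nonneg (by positivity)]
          exact Finset.single_le_sum (f := fun i => φ i ω.1 * ψ i ω.2)
            (fun i _ => by positivity) (Finset.mem_univ i0)
      have hsec := hterm.prod_right_ae
      have hT : μZ {z : Fin d → Bool | z i0 = true} = ENNReal.ofReal (p i0) := by
        have hTset : {z : Fin d → Bool | z i0 = true}
            = Function.eval i0 ⁻¹' ({true} : Set Bool) := rfl
        rw [hTset, ← Measure.map_apply (measurable_pi_apply i0) (measurableSet_singleton true),
          hμZ, map_eval_pi (fun i => bern (p i)) i0, bern]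
        simp only [Measure.add_apply, Measure.smul_apply, smul_eq_mul]
        rw [Measure.dirac_apply_of_mem (by simp : true ∈ ({true} : Set Bool)),
          Measure.dirac_apply' _ (measurableSet_singleton true)]
        simp
      have hTne : μZ {z : Fin d → Bool | z i0 = true} ≠ 0 := by
        rw [hT]
        exact (ENNReal.ofReal_pos.mpr (hp i0).1).ne'
      have hex : ∃ z : Fin d → Bool, z i0 = true
          ∧ Integrable (fun ξ => φ i0 z * ψ i0 ξ) μX := by
        by_contra hcon
        push_neg at hcon
        apply hTne
        apply measure_mono_null _ (ae_iff.mp hsec)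
        intro z hz
        exact hcon z hz
      obtain ⟨z, hz1, hz2⟩ := hex
      have hφz : φ i0 z = (1 / p i0) ^ 2 := by simp [hφdef, hz1]
      have hψi : Integrable (ψ i0) μX := by
        have hp0 := (hp i0).1
        have hc0 : φ i0 z ≠ 0 := by rw [hφz]; positivity
        have := hz2.const_mul (φ i0 z)⁻¹
        apply this.congr
        filter_upwards with ξ
        field_simp
      rw [hψdef, hμX] at hψi
      exact bad_not_integrable P (h i0) (hmeas i0) hi0 bc hbc hψi
    rw [integral_undef hnint]
    apply Finset.sum_nonneg
    intro i _
    apply mul_nonneg (div_nonneg zero_le_one (hp i).1.le)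
    positivity
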